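/- The average-over-time distribution shift satisfies D_KL(ρ_{π_A}, ρ_{π_E}) ≤ (1/H) Σ_{t=0}^{H-1} (H−t) · E_{s∼ρ^t_{π_A}}[D_KL(π_A(·|s), π_E(·|s))], i.e., action divergence at each timestep contributes weighted by time-to-go. -/

import Mathlib

open Finset Real

lemma term_ineq {c p q : ℝ} (hc : 0 < c) (hp : 0 ≤ p) (hq : 0 ≤ q)
    (hpq : q = 0 → p = 0) : p - q * c ≤ p * (Real.log (p / q) - Real.log c) := by
  rcases eq_or_lt_of_le hp with h | h
  · rw [← h]
    simp
    positivity
  · have hq' : 0 < q := lt_of_le_of_ne hq fun h0 => by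
      have := hpq h0.symm; linarith
    have hx : 0 < q * c / p := by positivity
    have hlb := Real.log_le_sub_one_of_pos hx
    have hlog : Real.log (q * c / p) = -(Real.log (p / q) - Real.log c) := by
      rw [Real.log_div (by positivity) (ne_of_gt h), Real.log_mul (ne_of_gt hq') (ne_of_gt hc),
        Real.log_div (ne_of_gt h) (ne_of_gt hq')]
      ring
    have h1 : p * Real.log (q * c / p) ≤ p * (q * c / p - 1) :=
      mul_le_mul_of_nonneg_left hlb (le_of_lt h)
    have h2 : p * (q * c / p - 1) = q * c - p := by field_simp
    rw [hlog] at h1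
    linarith

lemma log_sum_ineq {ι : Type*} (s : Finset ι) (p q : ι → ℝ)
    (hp : ∀ i ∈ s, 0 ≤ p i) (hq : ∀ i ∈ s, 0 ≤ q i)
    (hpq : ∀ i ∈ s, q i = 0 → p i = 0) :
    (∑ i ∈ s, p i) * Real.log ((∑ i ∈ s, p i) / (∑ i ∈ s, q i)) ≤
      ∑ i ∈ s, p i * Real.log (p i / q i) := by
  set P := ∑ i ∈ s, p i with hPdef
  set Q := ∑ i ∈ s, q i with hQdef
  have hP : 0 ≤ P := Finset.sum_nonneg hp
  have hQ : 0 ≤ Q := Finset.sum_nonneg hq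
  rcases eq_or_lt_of_le hQ with hQ0 | hQ0
  · have hq0 : ∀ i ∈ s, q i = 0 := by
      intro i hi
      exact (Finset.sum_eq_zero_iff_of_nonneg hq).mp hQ0.symm i hi
    have hp0 : ∀ i ∈ s, p i = 0 := fun i hi => hpq i hi (hq0 i hi)
    have hP0 : P = 0 := Finset.sum_eq_zero hp0
    rw [hP0, zero_mul]
    exact le_of_eq (Finset.sum_eq_zero fun i hi => by rw [hp0 i hi, zero_mul]).symm
  · rcases eq_or_lt_of_le hP with hP0 | hP0
    · have hp0 : ∀ i ∈ s, p i = 0 := by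
        intro i hi
        exact (Finset.sum_eq_zero_iff_of_nonneg hp).mp hP0.symm i hi
      rw [← hP0, zero_mul]
      exact le_of_eq (Finset.sum_eq_zero fun i hi => by rw [hp0 i hi, zero_mul]).symm
    · have hc : 0 < P / Q := by positivity
      have key : ∀ i ∈ s, p i - q i * (P / Q) ≤
          p i * (Real.log (p i / q i) - Real.log (P / Q)) :=
        fun i hi => term_ineq hc (hp i hi) (hq i hi) (hpq i hi)
      have hsum := Finset.sum_le_sum key
      have hL : ∑ i ∈ s, (p i - q i * (P / Q)) = 0 := by
        rw [Finset.sum_sub_distrib, ← Finset.sum_mul, ← hPdef, ← hQdef]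
        field_simp
        ring
      have hR : ∑ i ∈ s, p i * (Real.log (p i / q i) - Real.log (P / Q)) =
          (∑ i ∈ s, p i * Real.log (p i / q i)) - P * Real.log (P / Q) := by
        simp only [mul_sub]
        rw [Finset.sum_sub_distrib, ← Finset.sum_mul]
      rw [hL, hR] at hsum
      linarith

lemma count_ident (e : ℕ → ℝ) : ∀ n : ℕ,
    ∑ t ∈ Finset.Icc 1 n, ∑ k ∈ Finset.range t, e k =
      ∑ k ∈ Finset.range n, ((n : ℝ) - k) * e k := by
  intro n
  induction n with
  | zero => simp
  | succ n ih =>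
    rw [Finset.sum_Icc_succ_top (Nat.succ_le_succ (Nat.zero_le n)), ih, Finset.sum_range_succ]
    have h1 : ∑ k ∈ Finset.range (n + 1), (((n : ℝ) + 1) - k) * e k =
        (∑ k ∈ Finset.range (n + 1), ((n : ℝ) - k) * e k) +
          ∑ k ∈ Finset.range (n + 1), e k := by
      rw [← Finset.sum_add_distrib]
      exact Finset.sum_congr rfl fun k _ => by ring
    push_cast
    rw [h1, Finset.sum_range_succ (fun k => ((n : ℝ) - k) * e k),
      Finset.sum_range_succ (fun k => e k)]
    simp

/-- Time-averaged distribution shift is bounded by the per-step action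
divergence weighted by time-to-go:
`D_KL(ρ_{π_A}, ρ_{π_E}) ≤ (1/H) ∑_{t=0}^{H-1} (H-t) E_{s ∼ ρ^t_{π_A}}[D_KL(π_A(·|s), π_E(·|s))]`. -/
theorem stmt_2 {S A : Type*} [Fintype S] [Fintype A]
    (πA πE : S → A → ℝ) (ρ : S → A → S → ℝ) (ρA ρE : ℕ → S → ℝ) (H : ℕ) (hH : 0 < H)
    (hπA_nonneg : ∀ s a, 0 ≤ πA s a) (hπE_nonneg : ∀ s a, 0 ≤ πE s a)
    (hπA_sum : ∀ s, ∑ a, πA s a = 1) (hπE_sum : ∀ s, ∑ a, πE s a = 1)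
    (hρ_nonneg : ∀ s a s', 0 ≤ ρ s a s') (hρ_sum : ∀ s a, ∑ s', ρ s a s' = 1)
    (h0_nonneg : ∀ s, 0 ≤ ρA 0 s) (h0_sum : ∑ s, ρA 0 s = 1)
    (hinit : ρA 0 = ρE 0)
    (hA_rec : ∀ t s', ρA (t + 1) s' = ∑ s, ∑ a, ρA t s * πA s a * ρ s a s')
    (hE_rec : ∀ t s', ρE (t + 1) s' = ∑ s, ∑ a, ρE t s * πE s a * ρ s a s')
    (hsupp_π : ∀ s a, 0 < πA s a → 0 < πE s a)
    (ρbarA ρbarE : S → ℝ)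
    (hbarA : ∀ s, ρbarA s = (1 / (H : ℝ)) * ∑ t ∈ Finset.Icc 1 H, ρA t s)
    (hbarE : ∀ s, ρbarE s = (1 / (H : ℝ)) * ∑ t ∈ Finset.Icc 1 H, ρE t s) :
    ∑ s, ρbarA s * Real.log (ρbarA s / ρbarE s) ≤
      (1 / (H : ℝ)) * ∑ t ∈ Finset.range H,
        ((H : ℝ) - t) * ∑ s, ρA t s * ∑ a, πA s a * Real.log (πA s a / πE s a) := by
  -- abbreviations
  set KL : ℕ → ℝ := fun t => ∑ s, ρA t s * Real.log (ρA t s / ρE t s) with hKL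
  set e : ℕ → ℝ := fun t => ∑ s, ρA t s * ∑ a, πA s a * Real.log (πA s a / πE s a) with he
  -- nonnegativity
  have hAnn : ∀ t s, 0 ≤ ρA t s := by
    intro t
    induction t with
    | zero => exact h0_nonneg
    | succ t ih =>
      intro s'
      rw [hA_rec]
      exact Finset.sum_nonneg fun s _ => Finset.sum_nonneg fun a _ =>
        mul_nonneg (mul_nonneg (ih s) (hπA_nonneg s a)) (hρ_nonneg s a s')
  have hEnn : ∀ t s, 0 ≤ ρE t s := by
    intro t
    induction t with
    | zero => intro s; rw [← hinit]; exact h0_nonneg s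
    | succ t ih =>
      intro s'
      rw [hE_rec]
      exact Finset.sum_nonneg fun s _ => Finset.sum_nonneg fun a _ =>
        mul_nonneg (mul_nonneg (ih s) (hπE_nonneg s a)) (hρ_nonneg s a s')
  have hπ0 : ∀ s a, πE s a = 0 → πA s a = 0 := by
    intro s a h
    by_contra hne
    have h1 : 0 < πA s a := lt_of_le_of_ne (hπA_nonneg s a) (Ne.symm hne)
    have h2 := hsupp_π s a h1
    rw [h] at h2
    exact lt_irrefl 0 h2
  -- absolute continuity of state marginals
  have himp : ∀ t s, ρE t s = 0 → ρA t s = 0 := by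
    intro t
    induction t with
    | zero => intro s h; rw [hinit]; exact h
    | succ t ih =>
      intro s' h
      rw [hE_rec] at h
      have hterm : ∀ s a, ρE t s * πE s a * ρ s a s' = 0 := by
        intro s a
        have houter := (Finset.sum_eq_zero_iff_of_nonneg (fun s _ =>
          Finset.sum_nonneg fun a _ => mul_nonneg (mul_nonneg (hEnn t s) (hπE_nonneg s a))
            (hρ_nonneg s a s'))).mp h
        have hinner := (Finset.sum_eq_zero_iff_of_nonneg (fun a _ =>
          mul_nonneg (mul_nonneg (hEnn t s) (hπE_nonneg s a)) (hρ_nonneg s a s'))).mp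
            (houter s (Finset.mem_univ s))
        exact hinner a (Finset.mem_univ a)
      rw [hA_rec]
      apply Finset.sum_eq_zero
      intro s _
      apply Finset.sum_eq_zero
      intro a _
      by_contra hne
      have hA' : ρA t s ≠ 0 := fun h0 => hne (by rw [h0, zero_mul, zero_mul])
      have hπ' : πA s a ≠ 0 := fun h0 => hne (by rw [h0, mul_zero, zero_mul])
      have hr' : ρ s a s' ≠ 0 := fun h0 => hne (by rw [h0, mul_zero])
      have hE : 0 < ρE t s := lt_of_le_of_ne (hEnn t s) (Ne.symm fun h0 => hA' (ih s h0))
      have hπE : 0 < πE s a := hsupp_π s a (lt_of_le_of_ne (hπA_nonneg s a) (Ne.symm hπ'))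
      have hrpos : 0 < ρ s a s' := lt_of_le_of_ne (hρ_nonneg s a s') (Ne.symm hr')
      have hpos : 0 < ρE t s * πE s a * ρ s a s' := by positivity
      rw [hterm s a] at hpos
      exact lt_irrefl 0 hpos
  -- chain rule step
  have hstep : ∀ t, KL (t + 1) ≤ KL t + e t := by
    intro t
    have h1 : ∀ s' : S, ρA (t + 1) s' * Real.log (ρA (t + 1) s' / ρE (t + 1) s') ≤
        ∑ x : S × A, (ρA t x.1 * πA x.1 x.2 * ρ x.1 x.2 s') *
          Real.log ((ρA t x.1 * πA x.1 x.2 * ρ x.1 x.2 s') /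
            (ρE t x.1 * πE x.1 x.2 * ρ x.1 x.2 s')) := by
      intro s'
      have hls := log_sum_ineq Finset.univ
        (fun x : S × A => ρA t x.1 * πA x.1 x.2 * ρ x.1 x.2 s')
        (fun x : S × A => ρE t x.1 * πE x.1 x.2 * ρ x.1 x.2 s')
        (fun x _ => mul_nonneg (mul_nonneg (hAnn t x.1) (hπA_nonneg x.1 x.2))
          (hρ_nonneg x.1 x.2 s'))
        (fun x _ => mul_nonneg (mul_nonneg (hEnn t x.1) (hπE_nonneg x.1 x.2))
          (hρ_nonneg x.1 x.2 s'))
        (fun x _ hx => by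
          have hx' : ρE t x.1 * πE x.1 x.2 * ρ x.1 x.2 s' = 0 := hx
          show ρA t x.1 * πA x.1 x.2 * ρ x.1 x.2 s' = 0
          rcases mul_eq_zero.mp hx' with h | h
          · rcases mul_eq_zero.mp h with h2 | h2
            · rw [himp t x.1 h2, zero_mul, zero_mul]
            · rw [hπ0 x.1 x.2 h2, mul_zero, zero_mul]
          · rw [h, mul_zero])
      have hA' : (∑ x : S × A, ρA t x.1 * πA x.1 x.2 * ρ x.1 x.2 s') = ρA (t + 1) s' := by
        rw [Fintype.sum_prod_type, hA_rec]
      have hE' : (∑ x : S × A, ρE t x.1 * πE x.1 x.2 * ρ x.1 x.2 s') = ρE (t + 1) s' := by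
        rw [Fintype.sum_prod_type, hE_rec]
      rw [hA', hE'] at hls
      exact hls
    have hpt : ∀ (s : S) (a : A) (s' : S),
        (ρA t s * πA s a * ρ s a s') *
          Real.log ((ρA t s * πA s a * ρ s a s') / (ρE t s * πE s a * ρ s a s')) =
        (ρA t s * πA s a * ρ s a s') *
          (Real.log (ρA t s / ρE t s) + Real.log (πA s a / πE s a)) := by
      intro s a s'
      rcases eq_or_ne (ρA t s * πA s a * ρ s a s') 0 with h0 | h0
      · rw [h0, zero_mul, zero_mul]
      · have h1 := mul_ne_zero_iff.mp h0
        have h2 := mul_ne_zero_iff.mp h1.1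
        have hA' : 0 < ρA t s := lt_of_le_of_ne (hAnn t s) (Ne.symm h2.1)
        have hπ' : 0 < πA s a := lt_of_le_of_ne (hπA_nonneg s a) (Ne.symm h2.2)
        have hr' : 0 < ρ s a s' := lt_of_le_of_ne (hρ_nonneg s a s') (Ne.symm h1.2)
        have hE : 0 < ρE t s := lt_of_le_of_ne (hEnn t s)
          (Ne.symm fun h => h2.1 (himp t s h))
        have hπE : 0 < πE s a := hsupp_π s a hπ'
        congr 1
        rw [show (ρA t s * πA s a * ρ s a s') / (ρE t s * πE s a * ρ s a s') =
            (ρA t s / ρE t s) * (πA s a / πE s a) by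
          field_simp]
        exact Real.log_mul (ne_of_gt (by positivity)) (ne_of_gt (by positivity))
    have h2 : (∑ s' : S, ∑ x : S × A, (ρA t x.1 * πA x.1 x.2 * ρ x.1 x.2 s') *
          Real.log ((ρA t x.1 * πA x.1 x.2 * ρ x.1 x.2 s') /
            (ρE t x.1 * πE x.1 x.2 * ρ x.1 x.2 s'))) = KL t + e t := by
      rw [Finset.sum_comm]
      have hx : ∀ x : S × A, (∑ s' : S, (ρA t x.1 * πA x.1 x.2 * ρ x.1 x.2 s') *
          Real.log ((ρA t x.1 * πA x.1 x.2 * ρ x.1 x.2 s') /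
            (ρE t x.1 * πE x.1 x.2 * ρ x.1 x.2 s'))) =
          ρA t x.1 * πA x.1 x.2 *
            (Real.log (ρA t x.1 / ρE t x.1) + Real.log (πA x.1 x.2 / πE x.1 x.2)) := by
        intro x
        rw [Finset.sum_congr rfl (fun s' _ => hpt x.1 x.2 s')]
        have hrw : ∀ s' : S, (ρA t x.1 * πA x.1 x.2 * ρ x.1 x.2 s') *
            (Real.log (ρA t x.1 / ρE t x.1) + Real.log (πA x.1 x.2 / πE x.1 x.2)) =
            (ρA t x.1 * πA x.1 x.2 *
              (Real.log (ρA t x.1 / ρE t x.1) + Real.log (πA x.1 x.2 / πE x.1 x.2))) *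
              ρ x.1 x.2 s' := fun s' => by ring
        rw [Finset.sum_congr rfl (fun s' _ => hrw s'), ← Finset.mul_sum, hρ_sum, mul_one]
      rw [Finset.sum_congr rfl (fun x _ => hx x), Fintype.sum_prod_type]
      simp only [hKL, he]
      rw [← Finset.sum_add_distrib]
      apply Finset.sum_congr rfl
      intro s _
      have hsplit : ∀ a : A, ρA t s * πA s a *
          (Real.log (ρA t s / ρE t s) + Real.log (πA s a / πE s a)) =
          (ρA t s * Real.log (ρA t s / ρE t s)) * πA s a +
            ρA t s * (πA s a * Real.log (πA s a / πE s a)) := fun a => by ring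
      rw [Finset.sum_congr rfl (fun a _ => hsplit a), Finset.sum_add_distrib,
        ← Finset.mul_sum, ← Finset.mul_sum, hπA_sum, mul_one]
    calc KL (t + 1) ≤ ∑ s' : S, ∑ x : S × A, (ρA t x.1 * πA x.1 x.2 * ρ x.1 x.2 s') *
          Real.log ((ρA t x.1 * πA x.1 x.2 * ρ x.1 x.2 s') /
            (ρE t x.1 * πE x.1 x.2 * ρ x.1 x.2 s')) :=
        Finset.sum_le_sum fun s' _ => h1 s'
      _ = KL t + e t := h2
  -- base case
  have hKL0 : KL 0 = 0 := by
    simp only [hKL]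
    apply Finset.sum_eq_zero
    intro s _
    rw [hinit]
    rcases eq_or_ne (ρE 0 s) 0 with h | h
    · rw [h, zero_mul]
    · rw [div_self h, Real.log_one, mul_zero]
  -- telescoping
  have htel : ∀ t, KL t ≤ ∑ k ∈ Finset.range t, e k := by
    intro t
    induction t with
    | zero => rw [hKL0]; simp
    | succ t ih =>
      calc KL (t + 1) ≤ KL t + e t := hstep t
        _ ≤ (∑ k ∈ Finset.range t, e k) + e t := by linarith
        _ = ∑ k ∈ Finset.range (t + 1), e k := (Finset.sum_range_succ e t).symm
  have hHpos : (0 : ℝ) < H := Nat.cast_pos.mpr hH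
  -- averaging (convexity)
  have havg : ∑ s, ρbarA s * Real.log (ρbarA s / ρbarE s) ≤
      (1 / (H : ℝ)) * ∑ t ∈ Finset.Icc 1 H, KL t := by
    have hper : ∀ s : S, ρbarA s * Real.log (ρbarA s / ρbarE s) ≤
        (1 / (H : ℝ)) * ∑ t ∈ Finset.Icc 1 H, ρA t s * Real.log (ρA t s / ρE t s) := by
      intro s
      have hls := log_sum_ineq (Finset.Icc 1 H) (fun t => ρA t s) (fun t => ρE t s)
        (fun t _ => hAnn t s) (fun t _ => hEnn t s) (fun t _ h => himp t s h)
      have hratio : ρbarA s / ρbarE s =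
          (∑ t ∈ Finset.Icc 1 H, ρA t s) / (∑ t ∈ Finset.Icc 1 H, ρE t s) := by
        rw [hbarA, hbarE, mul_div_mul_left _ _ (by positivity : (1 / (H : ℝ)) ≠ 0)]
      rw [hratio, hbarA, mul_assoc]
      exact mul_le_mul_of_nonneg_left hls (by positivity)
    calc ∑ s, ρbarA s * Real.log (ρbarA s / ρbarE s)
        ≤ ∑ s, (1 / (H : ℝ)) * ∑ t ∈ Finset.Icc 1 H, ρA t s * Real.log (ρA t s / ρE t s) :=
          Finset.sum_le_sum fun s _ => hper s
      _ = (1 / (H : ℝ)) * ∑ t ∈ Finset.Icc 1 H, KL t := by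
          rw [← Finset.mul_sum, Finset.sum_comm]
  calc ∑ s, ρbarA s * Real.log (ρbarA s / ρbarE s)
      ≤ (1 / (H : ℝ)) * ∑ t ∈ Finset.Icc 1 H, KL t := havg
    _ ≤ (1 / (H : ℝ)) * ∑ t ∈ Finset.Icc 1 H, ∑ k ∈ Finset.range t, e k :=
        mul_le_mul_of_nonneg_left (Finset.sum_le_sum fun t _ => htel t) (by positivity)
    _ = (1 / (H : ℝ)) * ∑ k ∈ Finset.range H, ((H : ℝ) - k) * e k := by
        rw [count_ident e H]
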